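/- arXiv:1703.08044 — 4 statements merged into one kernel-verified Lean document; each statement's English description precedes it below -/
import Mathlib

section
/- Let K ≥ 1, S ≥ 2. For h in (ℝ^S)^K with all components h_k nonzero, define P(h) as the order-K tensor with entries P(h)_{i_1,...,i_K} = h_{1,i_1} ⋯ h_{K,i_K}. Then for two such parameter tuples h and g, P(h) = P(g) if and only if there exist scalars λ_1,...,λ_K with ∏_k λ_k = 1 and h_k = λ_k g_k for all k. -/
open scoped BigOperators ENNReal
open Finset

/-- Parameters of the network: `K` vectors in `ℝ^S`. -/
abbrev Params (K S : ℕ) := Fin K → Fin S → ℝ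

/-- Order-`K` tensors with all sides of size `S`. -/
abbrev Tensor (K S : ℕ) := (Fin K → Fin S) → ℝ

/-- The Segre map: `P(h)_{i_1,…,i_K} = h_{1,i_1} ⋯ h_{K,i_K}`. -/
noncomputable def Segre {K S : ℕ} (h : Params K S) : Tensor K S :=
  fun i => ∏ k, h k (i k)

/-- Parameters with all components nonzero. -/
def hSstar (K S : ℕ) : Set (Params K S) := {h | ∀ k, h k ≠ 0}

/-- The rescaling equivalence class of `h` (product of scales equal to `1`). -/
def CL {K S : ℕ} (h : Params K S) : Set (Params K S) :=
  {g | ∃ lam : Fin K → ℝ, (∏ k, lam k) = 1 ∧ ∀ k, g k = lam k • h k}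

/-- Sup norm on `ℝ^S`. -/
noncomputable def supnorm {S : ℕ} (x : Fin S → ℝ) : ℝ := ⨆ i, |x i|

/-- Parameters in `hSstar` whose components all have the same sup norm. -/
def hSdiag (K S : ℕ) : Set (Params K S) :=
  hSstar K S ∩ {h | ∀ k k' : Fin K, supnorm (h k) = supnorm (h k')}

/-- Entrywise `ℓ^p` norm, `p ∈ [1,∞]`. -/
noncomputable def pnorm (p : ℝ≥0∞) {ι : Type*} [Fintype ι] (x : ι → ℝ) : ℝ :=
  if p = ∞ then ⨆ i, |x i| else (∑ i, |x i| ^ p.toReal) ^ (1 / p.toReal)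

/-- Flatten parameters into a vector of length `K·S`. -/
def flat {K S : ℕ} (h : Params K S) : Fin K × Fin S → ℝ := fun ki => h ki.1 ki.2

/-- The distance `d_p` between rescaling classes, via representatives in `hSdiag`. -/
noncomputable def dDist {K S : ℕ} (p : ℝ≥0∞) (h g : Params K S) : ℝ :=
  sInf ((fun pr : Params K S × Params K S => pnorm p (flat pr.1 - flat pr.2)) ''
    {pr | pr.1 ∈ CL h ∩ hSdiag K S ∧ pr.2 ∈ CL g ∩ hSdiag K S})

/-- identifiability of the class `CL(h)` from the Segre tensor `P(h)`. -/
theorem segre_eq_iff_rescaling {K S : ℕ} (hK : 1 ≤ K) (hS : 2 ≤ S)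
    (h g : Params K S) (hh : h ∈ hSstar K S) (hg : g ∈ hSstar K S) :
    Segre h = Segre g ↔
      ∃ lam : Fin K → ℝ, (∏ k, lam k) = 1 ∧ ∀ k, h k = lam k • g k := by
  constructor
  · intro hPQ
    have hEq : ∀ i : Fin K → Fin S, (∏ k, h k (i k)) = ∏ k, g k (i k) := by
      intro i; exact congrFun hPQ i
    -- choose indices where g is nonzero
    have hj : ∀ k, ∃ i, g k i ≠ 0 := fun k => Function.ne_iff.mp (hg k)
    choose j hjne using hj
    set A : Fin K → ℝ := fun k => h k (j k) with hA
    set B : Fin K → ℝ := fun k => g k (j k) with hB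
    have hAB : (∏ k, A k) = ∏ k, B k := hEq j
    have hBne : (∏ k, B k) ≠ 0 := Finset.prod_ne_zero_iff.mpr fun k _ => hjne k
    have hAne : (∏ k, A k) ≠ 0 := hAB ▸ hBne
    have hAkne : ∀ k, A k ≠ 0 := fun k =>
      Finset.prod_ne_zero_iff.mp hAne k (Finset.mem_univ k)
    refine ⟨fun k => A k / B k, ?_, ?_⟩
    · show (∏ k, A k / B k) = 1
      rw [Finset.prod_div_distrib, hAB, div_self hBne]
    · intro k0
      funext i
      have hkey := hEq (Function.update j k0 i)
      rw [← Finset.mul_prod_erase Finset.univ _ (Finset.mem_univ k0),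
          ← Finset.mul_prod_erase Finset.univ (fun k => g k (Function.update j k0 i k))
            (Finset.mem_univ k0)] at hkey
      have hprod : ∀ f : Fin K → Fin S → ℝ,
          (∏ k ∈ Finset.univ.erase k0, f k (Function.update j k0 i k))
            = ∏ k ∈ Finset.univ.erase k0, f k (j k) := by
        intro f
        refine Finset.prod_congr rfl fun k hk => ?_
        rw [Function.update_of_ne (Finset.ne_of_mem_erase hk)]
      rw [hprod h, hprod g] at hkey
      simp only [Function.update_self] at hkey
      have hkey2 : A k0 * ∏ k ∈ Finset.univ.erase k0, A k
          = B k0 * ∏ k ∈ Finset.univ.erase k0, B k := by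
        rw [Finset.mul_prod_erase Finset.univ A (Finset.mem_univ k0),
            Finset.mul_prod_erase Finset.univ B (Finset.mem_univ k0)]
        exact hAB
      have hPAne : (∏ k ∈ Finset.univ.erase k0, A k) ≠ 0 :=
        Finset.prod_ne_zero_iff.mpr fun k _ => hAkne k
      have hPBne : (∏ k ∈ Finset.univ.erase k0, B k) ≠ 0 :=
        Finset.prod_ne_zero_iff.mpr fun k _ => hjne k
      have hBk0 : B k0 ≠ 0 := hjne k0
      have hAk0 : A k0 ≠ 0 := hAkne k0
      show h k0 i = (A k0 / B k0) • g k0 i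
      rw [smul_eq_mul]
      field_simp
      -- h k0 i * B k0 = A k0 * g k0 i
      apply mul_right_cancel₀ hPBne
      calc h k0 i * B k0 * ∏ k ∈ Finset.univ.erase k0, B k
            = h k0 i * (B k0 * ∏ k ∈ Finset.univ.erase k0, B k) := by ring
          _ = h k0 i * (A k0 * ∏ k ∈ Finset.univ.erase k0, A k) := by rw [hkey2]
          _ = (h k0 i * ∏ k ∈ Finset.univ.erase k0, A k) * A k0 := by ring
          _ = (g k0 i * ∏ k ∈ Finset.univ.erase k0, B k) * A k0 := by rw [hkey]
          _ = A k0 * g k0 i * ∏ k ∈ Finset.univ.erase k0, B k := by ring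
  · rintro ⟨lam, hlam, hcomp⟩
    funext i
    simp only [Segre]
    calc (∏ k, h k (i k)) = ∏ k, lam k * g k (i k) := by
          refine Finset.prod_congr rfl fun k _ => ?_
          rw [hcomp k]; rfl
      _ = (∏ k, lam k) * ∏ k, g k (i k) := Finset.prod_mul_distrib
      _ = ∏ k, g k (i k) := by rw [hlam, one_mul]
end

section
/- For h ∈ hS_* (all components nonzero), the set CL(h) ∩ hSdiag is nonempty and finite; moreover, if g, g' ∈ CL(h) ∩ hSdiag, then for each k there exists ε_k ∈ {−1, +1} with ∏_k ε_k = 1 such that g'_k = ε_k g_k. -/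
open scoped BigOperators ENNReal
open Finset

lemma clAux_supnorm_smul {S : ℕ} [Nonempty (Fin S)] (c : ℝ) (x : Fin S → ℝ) :
    supnorm (c • x) = |c| * supnorm x := by
  unfold supnorm
  simp only [Pi.smul_apply, smul_eq_mul, abs_mul]
  rw [Real.mul_iSup_of_nonneg (abs_nonneg c)]

lemma clAux_supnorm_pos {S : ℕ} [Nonempty (Fin S)] (x : Fin S → ℝ) (hx : x ≠ 0) :
    0 < supnorm x := by
  obtain ⟨i, hi⟩ := Function.ne_iff.mp hx
  have h1 : (0:ℝ) < |x i| := abs_pos.mpr hi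
  exact h1.trans_le (le_ciSup (f := fun i => |x i|) (Set.finite_range _).bddAbove i)

/-- Sign lemma: any two elements of `CL h ∩ hSdiag` differ by signs. -/
lemma clAux_sign {K S : ℕ} (hK : 1 ≤ K) [Nonempty (Fin S)] [Nonempty (Fin K)]
    (h : Params K S)
    {g g' : Params K S} (hg : g ∈ CL h ∩ hSdiag K S) (hg' : g' ∈ CL h ∩ hSdiag K S) :
    ∃ eps : Fin K → ℝ, (∀ k, eps k = 1 ∨ eps k = -1) ∧ (∏ k, eps k) = 1 ∧
      ∀ k, g' k = eps k • g k := by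
  obtain ⟨⟨lam, hlam1, hlam2⟩, hgstar, hgdiag⟩ := hg
  obtain ⟨⟨mu, hmu1, hmu2⟩, hg'star, hg'diag⟩ := hg'
  have hlamne : ∀ k, lam k ≠ 0 := by
    intro k hk
    apply hgstar k
    rw [hlam2 k, hk, zero_smul]
  set eps : Fin K → ℝ := fun k => mu k / lam k with heps
  have hsm : ∀ k, g' k = eps k • g k := by
    intro k
    rw [hmu2 k, hlam2 k, smul_smul, heps]
    congr 1
    rw [div_mul_cancel₀ _ (hlamne k)]
  have hprod : (∏ k, eps k) = 1 := by
    simp only [heps, Finset.prod_div_distrib, hmu1, hlam1, div_one]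
  set k0 : Fin K := Classical.arbitrary _
  have hgpos : 0 < supnorm (g k0) := clAux_supnorm_pos _ (hgstar k0)
  have hg'pos : 0 < supnorm (g' k0) := clAux_supnorm_pos _ (hg'star k0)
  set t : ℝ := supnorm (g' k0) / supnorm (g k0) with ht
  have habs : ∀ k, |eps k| = t := by
    intro k
    have h1 : supnorm (g' k) = |eps k| * supnorm (g k) := by
      rw [hsm k]; exact clAux_supnorm_smul _ _
    have h2 : supnorm (g' k) = supnorm (g' k0) := hg'diag k k0
    have h3 : supnorm (g k) = supnorm (g k0) := hgdiag k k0
    rw [h2, h3] at h1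
    rw [ht, h1, mul_div_assoc, div_self (ne_of_gt hgpos), mul_one]
  have htpos : 0 < t := div_pos hg'pos hgpos
  have htpow : t ^ K = 1 := by
    have h1 : |∏ k, eps k| = 1 := by rw [hprod]; simp
    rw [Finset.abs_prod] at h1
    simp only [habs] at h1
    simpa [Finset.prod_const, Finset.card_univ] using h1
  have ht1 : t = 1 := by
    rcases lt_trichotomy t 1 with h1 | h1 | h1
    · have := pow_lt_one₀ htpos.le h1 (by omega : K ≠ 0)
      rw [htpow] at this; linarith
    · exact h1
    · have := one_lt_pow₀ h1 (by omega : K ≠ 0)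
      rw [htpow] at this; linarith
  refine ⟨eps, fun k => ?_, hprod, hsm⟩
  have h2 := habs k
  rw [ht1] at h2
  exact (abs_eq (by norm_num : (0:ℝ) ≤ 1)).mp h2

/-- `CL(h) ∩ hSdiag` is nonempty and finite, and any two of its
elements differ componentwise by signs `ε_k ∈ {±1}` with `∏ ε_k = 1`. -/
theorem cl_inter_diag_nonempty_finite {K S : ℕ} (hK : 1 ≤ K) (hS : 2 ≤ S)
    (h : Params K S) (hh : h ∈ hSstar K S) :
    (CL h ∩ hSdiag K S).Nonempty ∧ (CL h ∩ hSdiag K S).Finite ∧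
      ∀ g ∈ CL h ∩ hSdiag K S, ∀ g' ∈ CL h ∩ hSdiag K S,
        ∃ eps : Fin K → ℝ, (∀ k, eps k = 1 ∨ eps k = -1) ∧ (∏ k, eps k) = 1 ∧
          ∀ k, g' k = eps k • g k := by
  have : Nonempty (Fin S) := ⟨⟨0, by omega⟩⟩
  have : Nonempty (Fin K) := ⟨⟨0, by omega⟩⟩
  set ν : Fin K → ℝ := fun k => supnorm (h k) with hν
  have hνpos : ∀ k, 0 < ν k := fun k => clAux_supnorm_pos _ (hh k)
  have hPpos : 0 < ∏ k, ν k := Finset.prod_pos (fun k _ => hνpos k)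
  set c : ℝ := (∏ k, ν k) ^ ((K:ℝ)⁻¹) with hc
  have hcpos : 0 < c := Real.rpow_pos_of_pos hPpos _
  set lam : Fin K → ℝ := fun k => c / ν k with hlam
  have hlampos : ∀ k, 0 < lam k := fun k => div_pos hcpos (hνpos k)
  have hlamprod : (∏ k, lam k) = 1 := by
    rw [hlam]
    rw [Finset.prod_div_distrib, Finset.prod_const, Finset.card_univ, Fintype.card_fin]
    rw [hc, ← Real.rpow_natCast ((∏ k, ν k) ^ ((K:ℝ)⁻¹)) K, ← Real.rpow_mul hPpos.le]
    rw [inv_mul_cancel₀ (Nat.cast_ne_zero.mpr (by omega : K ≠ 0))]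
    rw [Real.rpow_one]
    exact div_self (ne_of_gt hPpos)
  set g0 : Params K S := fun k => lam k • h k with hg0
  have hg0mem : g0 ∈ CL h ∩ hSdiag K S := by
    refine ⟨⟨lam, hlamprod, fun k => rfl⟩, fun k => ?_, fun k k' => ?_⟩
    · exact smul_ne_zero (ne_of_gt (hlampos k)) (hh k)
    · have e : ∀ j, supnorm (g0 j) = c := by
        intro j
        show supnorm (lam j • h j) = c
        rw [clAux_supnorm_smul, abs_of_pos (hlampos j)]
        show (c / ν j) * ν j = c
        rw [div_mul_cancel₀ _ (ne_of_gt (hνpos j))]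
      rw [e k, e k']
  refine ⟨⟨g0, hg0mem⟩, ?_, fun g hg g' hg' => clAux_sign hK h hg hg'⟩
  have hsub : CL h ∩ hSdiag K S ⊆
      (fun eps : Fin K → ℝ => fun k => eps k • g0 k) ''
        (Set.pi Set.univ fun _ => ({1, -1} : Set ℝ)) := by
    intro g hg
    obtain ⟨eps, heps1, _, heps3⟩ := clAux_sign hK h hg0mem hg
    exact ⟨eps, fun k _ => heps1 k, by funext k; exact (heps3 k).symm⟩
  exact Set.Finite.subset ((Set.Finite.pi fun _ => (Set.toFinite _)).image _) hsub
end

section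
/- For any p ∈ [1, ∞], the function d_p(CL(h), CL(g)) = inf { ‖h' − g'‖_p : h' ∈ CL(h) ∩ hSdiag, g' ∈ CL(g) ∩ hSdiag } is a metric on the quotient hS_*/∼ (i.e., it is nonnegative, symmetric, vanishes exactly when CL(h) = CL(g), and satisfies the triangle inequality). -/
open scoped BigOperators ENNReal
open Finset

-- ## pnorm lemmas

lemma pnorm_eq_norm (p : ℝ≥0∞) (hp : 1 ≤ p) {ι} [Fintype ι] (x : ι → ℝ) :
    pnorm p x = ‖(WithLp.equiv p (ι → ℝ)).symm x‖ := by
  rcases eq_or_ne p ∞ with rfl | hne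
  · rw [pnorm, if_pos rfl, PiLp.norm_eq_ciSup]
    simp [Real.norm_eq_abs]
  · have ht : 0 < p.toReal := ENNReal.toReal_pos (by intro h0; simp [h0] at hp) hne
    rw [pnorm, if_neg hne, PiLp.norm_eq_sum ht]
    simp [Real.norm_eq_abs]

lemma pnorm_nonneg (p : ℝ≥0∞) (hp : 1 ≤ p) {ι} [Fintype ι] (x : ι → ℝ) :
    0 ≤ pnorm p x := by
  haveI : Fact (1 ≤ p) := ⟨hp⟩
  rw [pnorm_eq_norm p hp]; exact norm_nonneg _

lemma pnorm_eq_zero (p : ℝ≥0∞) (hp : 1 ≤ p) {ι} [Fintype ι] (x : ι → ℝ) :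
    pnorm p x = 0 ↔ x = 0 := by
  haveI : Fact (1 ≤ p) := ⟨hp⟩
  rw [pnorm_eq_norm p hp, norm_eq_zero]
  exact (WithLp.equiv p (ι → ℝ)).symm.injective.eq_iff' rfl

lemma pnorm_add_le (p : ℝ≥0∞) (hp : 1 ≤ p) {ι} [Fintype ι] (x y : ι → ℝ) :
    pnorm p (x + y) ≤ pnorm p x + pnorm p y := by
  haveI : Fact (1 ≤ p) := ⟨hp⟩
  rw [pnorm_eq_norm p hp, pnorm_eq_norm p hp, pnorm_eq_norm p hp]
  exact norm_add_le _ _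

lemma pnorm_congr_abs (p : ℝ≥0∞) {ι} [Fintype ι] {x y : ι → ℝ}
    (h : ∀ i, |x i| = |y i|) : pnorm p x = pnorm p y := by
  unfold pnorm
  split <;> simp only [h]

-- ## supnorm lemmas

lemma supnorm_eq_norm {S : ℕ} (x : Fin S → ℝ) :
    supnorm x = ‖(WithLp.equiv ∞ (Fin S → ℝ)).symm x‖ := by
  have : supnorm x = pnorm ∞ x := by simp [supnorm, pnorm]
  rw [this, pnorm_eq_norm ∞ le_top]

lemma supnorm_smul {S : ℕ} (c : ℝ) (x : Fin S → ℝ) :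
    supnorm (c • x) = |c| * supnorm x := by
  rw [supnorm_eq_norm, supnorm_eq_norm]
  have : (WithLp.equiv ∞ (Fin S → ℝ)).symm (c • x)
      = c • (WithLp.equiv ∞ (Fin S → ℝ)).symm x := rfl
  rw [this, norm_smul, Real.norm_eq_abs]

lemma supnorm_pos {S : ℕ} {x : Fin S → ℝ} (hx : x ≠ 0) : 0 < supnorm x := by
  rw [supnorm_eq_norm]
  rw [norm_pos_iff]
  intro h
  exact hx ((WithLp.equiv ∞ (Fin S → ℝ)).symm.injective.eq_iff' rfl |>.mp h)

-- ## CL lemmas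

lemma CL_refl {K S : ℕ} (h : Params K S) : h ∈ CL h :=
  ⟨fun _ => 1, by simp, fun k => by simp⟩

lemma CL_lam_ne_zero {K : ℕ} {lam : Fin K → ℝ} (hl : (∏ k, lam k) = 1) (k : Fin K) :
    lam k ≠ 0 := by
  intro h0
  rw [Finset.prod_eq_zero (Finset.mem_univ k) h0] at hl
  exact zero_ne_one hl

lemma CL_symm {K S : ℕ} {h g : Params K S} (hg : g ∈ CL h) : h ∈ CL g := by
  obtain ⟨lam, hl, he⟩ := hg
  refine ⟨fun k => (lam k)⁻¹, ?_, fun k => ?_⟩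
  · rw [show (∏ x : Fin K, (lam x)⁻¹) = (∏ x : Fin K, lam x)⁻¹ from Finset.prod_inv_distrib _, hl, inv_one]
  · rw [he k, smul_smul, inv_mul_cancel₀ (CL_lam_ne_zero hl k), one_smul]

lemma CL_trans {K S : ℕ} {h g f : Params K S} (hg : g ∈ CL h) (hf : f ∈ CL g) :
    f ∈ CL h := by
  obtain ⟨lam, hl, he⟩ := hg
  obtain ⟨mu, hm, hf⟩ := hf
  refine ⟨fun k => mu k * lam k, ?_, fun k => ?_⟩
  · rw [Finset.prod_mul_distrib, hl, hm, one_mul]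
  · rw [hf k, he k, smul_smul]

lemma CL_eq_of_mem {K S : ℕ} {h g : Params K S} (hg : g ∈ CL h) : CL g = CL h := by
  ext f
  exact ⟨fun hf => CL_trans hg hf, fun hf => CL_trans (CL_symm hg) hf⟩

lemma hSstar_of_CL {K S : ℕ} {h g : Params K S} (hg : g ∈ CL h)
    (hh : h ∈ hSstar K S) : g ∈ hSstar K S := by
  obtain ⟨lam, hl, he⟩ := hg
  intro k
  rw [he k]
  exact smul_ne_zero (CL_lam_ne_zero hl k) (hh k)

-- ## normalization

lemma exists_diag {K S : ℕ} (hK : 1 ≤ K) {h : Params K S} (hh : h ∈ hSstar K S) :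
    ∃ h', h' ∈ CL h ∩ hSdiag K S := by
  have hn : ∀ k, 0 < supnorm (h k) := fun k => supnorm_pos (hh k)
  set P : ℝ := ∏ j, supnorm (h j) with hP
  have hPpos : 0 < P := Finset.prod_pos fun j _ => hn j
  set c : ℝ := P ^ ((K : ℝ)⁻¹) with hc
  have hcpos : 0 < c := Real.rpow_pos_of_pos hPpos _
  have hcK : c ^ (K : ℕ) = P := by
    have hKne : (K : ℝ) ≠ 0 := Nat.cast_ne_zero.mpr (Nat.one_le_iff_ne_zero.mp hK)
    rw [hc, ← Real.rpow_natCast (P ^ ((K:ℝ)⁻¹)) K, ← Real.rpow_mul hPpos.le,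
      inv_mul_cancel₀ hKne, Real.rpow_one]
  set lam : Fin K → ℝ := fun k => c / supnorm (h k) with hlam
  have hlpos : ∀ k, 0 < lam k := fun k => div_pos hcpos (hn k)
  refine ⟨fun k => lam k • h k, ⟨lam, ?_, fun k => rfl⟩, ⟨fun k => smul_ne_zero (hlpos k).ne' (hh k), fun k k' => ?_⟩⟩
  · rw [hlam]
    simp only []
    rw [Finset.prod_div_distrib, Finset.prod_const, Finset.card_univ, Fintype.card_fin,
      ← hP, hcK, div_self hPpos.ne']
  · show supnorm (lam k • h k) = supnorm (lam k' • h k')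
    rw [supnorm_smul, supnorm_smul, abs_of_pos (hlpos k), abs_of_pos (hlpos k'), hlam]
    simp only []
    rw [div_mul_cancel₀ _ (hn k).ne', div_mul_cancel₀ _ (hn k').ne']

-- ## sup norm of diagonal representatives is determined

lemma supnorm_diag_eq {K S : ℕ} (hK : 1 ≤ K) {h g : Params K S}
    (hh : h ∈ hSstar K S) (hg : g ∈ CL h ∩ hSdiag K S) (k : Fin K) :
    supnorm (g k) = (∏ j, supnorm (h j)) ^ ((K : ℝ)⁻¹) := by
  obtain ⟨⟨lam, hl, he⟩, hgstar, hdiag⟩ := hg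
  have hKne : (K : ℝ) ≠ 0 := Nat.cast_ne_zero.mpr (Nat.one_le_iff_ne_zero.mp hK)
  set k0 : Fin K := ⟨0, hK⟩
  set t : ℝ := supnorm (g k0) with htdef
  have htpos : 0 < t := supnorm_pos (hgstar k0)
  have h1 : ∏ j, supnorm (g j) = t ^ (K : ℕ) := by
    calc ∏ j, supnorm (g j) = ∏ _j : Fin K, t := Finset.prod_congr rfl fun j _ => hdiag j k0
    _ = t ^ (K : ℕ) := by rw [Finset.prod_const, Finset.card_univ, Fintype.card_fin]
  have h2 : ∏ j, supnorm (g j) = ∏ j, supnorm (h j) := by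
    calc ∏ j, supnorm (g j) = ∏ j, |lam j| * supnorm (h j) := by
          refine Finset.prod_congr rfl fun j _ => ?_
          rw [he j, supnorm_smul]
    _ = (∏ j, |lam j|) * ∏ j, supnorm (h j) := Finset.prod_mul_distrib
    _ = ∏ j, supnorm (h j) := by
          rw [← Finset.abs_prod, hl, abs_one, one_mul]
  have h3 : t ^ (K : ℕ) = ∏ j, supnorm (h j) := by rw [← h1, h2]
  have h4 : t = (∏ j, supnorm (h j)) ^ ((K : ℝ)⁻¹) := by
    rw [← h3, ← Real.rpow_natCast t K, ← Real.rpow_mul htpos.le,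
      mul_inv_cancel₀ hKne, Real.rpow_one]
  rw [hdiag k k0, ← htdef, h4]

-- ## finiteness of diagonal representatives

lemma diag_finite {K S : ℕ} (hK : 1 ≤ K) {h : Params K S} (hh : h ∈ hSstar K S) :
    (CL h ∩ hSdiag K S).Finite := by
  have hn : ∀ k, 0 < supnorm (h k) := fun k => supnorm_pos (hh k)
  set c : ℝ := (∏ j, supnorm (h j)) ^ ((K : ℝ)⁻¹) with hc
  have hcpos : 0 < c := Real.rpow_pos_of_pos (Finset.prod_pos fun j _ => hn j) _
  set mu : Fin K → ℝ := fun k => c / supnorm (h k) with hmu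
  have hmupos : ∀ k, 0 < mu k := fun k => div_pos hcpos (hn k)
  have hsub : CL h ∩ hSdiag K S ⊆
      (fun ε : Fin K → ℝ => fun k => (ε k * mu k) • h k) ''
        (Set.pi Set.univ fun _ => ({-1, 1} : Set ℝ)) := by
    rintro g hg
    obtain ⟨⟨lam, hl, he⟩, hgstar, hdiag⟩ := hg
    have habs : ∀ k, |lam k| = mu k := by
      intro k
      have h1 := supnorm_diag_eq hK hh ⟨⟨lam, hl, he⟩, hgstar, hdiag⟩ k
      rw [he k, supnorm_smul] at h1
      rw [eq_div_iff (hn k).ne', hc, ← h1]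
    refine ⟨fun k => lam k / mu k, fun k _ => ?_, ?_⟩
    · have : |lam k / mu k| = 1 := by
        rw [abs_div, habs k, abs_of_pos (hmupos k), div_self (hmupos k).ne']
      rcases (abs_eq zero_le_one).mp this with h1 | h1
      · exact Or.inr h1
      · exact Or.inl h1
    · funext k
      show (lam k / mu k * mu k) • h k = g k
      rw [div_mul_cancel₀ _ (hmupos k).ne', ← he k]
  exact Set.Finite.subset
    (Set.Finite.image _ (Set.Finite.pi fun _ => (Set.finite_singleton (1:ℝ)).insert (-1)))
    hsub

/-- for every `p ∈ [1,∞]`, `d_p` is a metric on `hS_*/∼`: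
nonnegative, symmetric, vanishing exactly when the classes agree, and
satisfying the triangle inequality. -/
theorem dDist_is_metric {K S : ℕ} (hK : 1 ≤ K) (hS : 2 ≤ S)
    (p : ℝ≥0∞) (hp : 1 ≤ p) :
    (∀ h ∈ hSstar K S, ∀ g ∈ hSstar K S, 0 ≤ dDist p h g) ∧
    (∀ h ∈ hSstar K S, ∀ g ∈ hSstar K S, dDist p h g = dDist p g h) ∧
    (∀ h ∈ hSstar K S, ∀ g ∈ hSstar K S, (dDist p h g = 0 ↔ CL h = CL g)) ∧
    (∀ h ∈ hSstar K S, ∀ g ∈ hSstar K S, ∀ f ∈ hSstar K S,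
      dDist p h f ≤ dDist p h g + dDist p g f) := by
  set D : Params K S → Params K S → Set ℝ := fun h g =>
    (fun pr : Params K S × Params K S => pnorm p (flat pr.1 - flat pr.2)) ''
      {pr | pr.1 ∈ CL h ∩ hSdiag K S ∧ pr.2 ∈ CL g ∩ hSdiag K S} with hD
  have hDd : ∀ h g : Params K S, dDist p h g = sInf (D h g) := fun _ _ => rfl
  have hfin : ∀ {h g : Params K S}, h ∈ hSstar K S → g ∈ hSstar K S → (D h g).Finite := by
    intro h g hh hg
    apply Set.Finite.image
    have : {pr : Params K S × Params K S |
        pr.1 ∈ CL h ∩ hSdiag K S ∧ pr.2 ∈ CL g ∩ hSdiag K S}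
        = (CL h ∩ hSdiag K S) ×ˢ (CL g ∩ hSdiag K S) := rfl
    rw [this]
    exact (diag_finite hK hh).prod (diag_finite hK hg)
  have hne : ∀ {h g : Params K S}, h ∈ hSstar K S → g ∈ hSstar K S → (D h g).Nonempty := by
    intro h g hh hg
    obtain ⟨h', hh'⟩ := exists_diag hK hh
    obtain ⟨g', hg'⟩ := exists_diag hK hg
    exact ⟨_, ⟨(h', g'), ⟨hh', hg'⟩, rfl⟩⟩
  have hnn : ∀ h g : Params K S, 0 ≤ sInf (D h g) := by
    intro h g
    apply Real.sInf_nonneg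
    rintro r ⟨⟨a, b⟩, -, rfl⟩
    exact pnorm_nonneg p hp _
  have hle : ∀ {h g : Params K S}, h ∈ hSstar K S → g ∈ hSstar K S →
      ∀ {a b : Params K S}, a ∈ CL h ∩ hSdiag K S → b ∈ CL g ∩ hSdiag K S →
      sInf (D h g) ≤ pnorm p (flat a - flat b) := by
    intro h g hh hg a b ha hb
    exact csInf_le (hfin hh hg).bddBelow ⟨(a, b), ⟨ha, hb⟩, rfl⟩
  refine ⟨fun h _ g _ => hnn h g, ?_, ?_, ?_⟩
  · -- symmetry
    intro h _ g _
    rw [hDd, hDd]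
    congr 1
    ext r
    constructor
    · rintro ⟨⟨a, b⟩, ⟨ha, hb⟩, rfl⟩
      exact ⟨(b, a), ⟨hb, ha⟩, pnorm_congr_abs p fun i => by
        simp only [Pi.sub_apply]; exact abs_sub_comm _ _⟩
    · rintro ⟨⟨a, b⟩, ⟨ha, hb⟩, rfl⟩
      exact ⟨(b, a), ⟨hb, ha⟩, pnorm_congr_abs p fun i => by
        simp only [Pi.sub_apply]; exact abs_sub_comm _ _⟩
  · -- zero iff
    intro h hh g hg
    constructor
    · intro h0
      rw [hDd] at h0
      have hmem := Set.Nonempty.csInf_mem (hne hh hg) (hfin hh hg)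
      rw [h0] at hmem
      obtain ⟨⟨a, b⟩, ⟨ha, hb⟩, hab⟩ := hmem
      have hab0 : flat a - flat b = 0 := (pnorm_eq_zero p hp _).mp hab
      have haeb : a = b := by
        funext k i
        have := congrFun hab0 (k, i)
        simpa [flat, sub_eq_zero] using this
      rw [← CL_eq_of_mem ha.1, haeb, CL_eq_of_mem hb.1]
    · intro hCL
      obtain ⟨h', hh'⟩ := exists_diag hK hh
      have hh'g : h' ∈ CL g ∩ hSdiag K S := ⟨hCL ▸ hh'.1, hh'.2⟩
      refine le_antisymm ?_ (hnn h g)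
      have := hle hh hg hh' hh'g
      rwa [sub_self, (pnorm_eq_zero p hp 0).mpr rfl] at this
  · -- triangle
    intro h hh g hg f hf
    obtain ⟨⟨h', g'⟩, ⟨hh', hg'⟩, hval1⟩ := Set.Nonempty.csInf_mem (hne hh hg) (hfin hh hg)
    obtain ⟨⟨g'', f'⟩, ⟨hg'', hf'⟩, hval2⟩ := Set.Nonempty.csInf_mem (hne hg hf) (hfin hg hf)
    -- g' and g'' differ by signs
    have hg'CLg'' : g' ∈ CL g'' := (CL_eq_of_mem hg''.1).symm ▸ hg'.1
    obtain ⟨nu, hnu, henu⟩ := hg'CLg''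
    have habs : ∀ k, |nu k| = 1 := by
      intro k
      have h1 := supnorm_diag_eq hK hg hg' k
      have h2 := supnorm_diag_eq hK hg hg'' k
      have h3 : supnorm (g' k) = |nu k| * supnorm (g'' k) := by
        rw [henu k, supnorm_smul]
      have h4 : 0 < supnorm (g'' k) := supnorm_pos (hg''.2.1 k)
      have : supnorm (g'' k) = |nu k| * supnorm (g'' k) := by rw [← h3, h1, h2]
      field_simp at this
      linarith [this]
    have hnune : ∀ k, nu k ≠ 0 := by
      intro k h0
      have := habs k
      rw [h0, abs_zero] at this
      exact zero_ne_one this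
    set f'' : Params K S := fun k => nu k • f' k with hf''
    have hf''mem : f'' ∈ CL f ∩ hSdiag K S := by
      refine ⟨CL_trans hf'.1 ⟨nu, hnu, fun k => rfl⟩,
        fun k => smul_ne_zero (hnune k) (hf'.2.1 k), fun k k' => ?_⟩
      show supnorm (nu k • f' k) = supnorm (nu k' • f' k')
      rw [supnorm_smul, supnorm_smul, habs k, habs k', one_mul, one_mul]
      exact hf'.2.2 k k'
    have key : pnorm p (flat g' - flat f'') = pnorm p (flat g'' - flat f') := by
      apply pnorm_congr_abs
      rintro ⟨k, i⟩
      simp only [Pi.sub_apply, flat, hf'']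
      rw [henu k]
      simp only [Pi.smul_apply, smul_eq_mul]
      rw [← mul_sub, abs_mul, habs k, one_mul]
    calc dDist p h f ≤ pnorm p (flat h' - flat f'') := hle hh hf hh' hf''mem
      _ = pnorm p ((flat h' - flat g') + (flat g' - flat f'')) := by
          rw [sub_add_sub_cancel]
      _ ≤ pnorm p (flat h' - flat g') + pnorm p (flat g' - flat f'') :=
          pnorm_add_le p hp _ _
      _ = dDist p h g + dDist p g f := by
          have v1 : pnorm p (flat h' - flat g') = sInf (D h g) := hval1
          have v2 : pnorm p (flat g'' - flat f') = sInf (D g f) := hval2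
          rw [key, hDd, hDd, v1, v2]
end

section
/- Assume X = 𝒜P(h̄) with h̄ ∈ M_{L̄} for some L̄. Then: (1) the only minimizers of ‖𝒜P(h) − X‖² over ∪_L M_L are the elements of CL(h̄) if and only if for every L, (P(h̄) + ker 𝒜) ∩ P(M_L) ⊆ {P(h̄)}; (2) the collection of models M is identifiable (i.e., statement (1) holds for every L̄ and every h̄ ∈ M_{L̄}) if and only if for all L, L': ker(𝒜) ∩ (P(M_L) − P(M_{L'})) ⊆ {0}, where P(M_L) − P(M_{L'}) = {P(h) − P(g) : h ∈ M_L, g ∈ M_{L'}}. -/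
open scoped BigOperators ENNReal
open Finset

/-- Order-`K` tensors as a Euclidean space (Frobenius norm). -/
abbrev ETensor (K S : ℕ) := EuclideanSpace ℝ (Fin K → Fin S)

/-- The Segre map with values in the Euclidean tensor space. -/
noncomputable def SegE {K S : ℕ} (h : Params K S) : ETensor K S :=
  (WithLp.equiv 2 _).symm (Segre h)

/-- Smallest nonzero singular value of a linear map between Euclidean spaces:
the infimum of `‖A T‖` over unit vectors orthogonal to the kernel. -/
noncomputable def sigmaMin {E F : Type*} [NormedAddCommGroup E] [InnerProductSpace ℝ E]
    [NormedAddCommGroup F] [InnerProductSpace ℝ F] (A : E →ₗ[ℝ] F) : ℝ :=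
  sInf ((fun T => ‖A T‖) '' {T | T ∈ (LinearMap.ker A)ᗮ ∧ ‖T‖ = 1})

/-- The Deep-Null Space Property with constants `(γ, ρ)`. -/
def DeepNSP {K S m n : ℕ} (A : ETensor K S →ₗ[ℝ] EuclideanSpace ℝ (Fin m × Fin n))
    (Mod : ℕ → Set (Params K S)) (γ : ℝ) (ρ : ℝ≥0∞) : Prop :=
  ∀ L L' : ℕ, ∀ h ∈ Mod L, ∀ g ∈ Mod L',
    ENNReal.ofReal ‖A (SegE h - SegE g)‖ ≤ ρ →
    ∀ T' ∈ LinearMap.ker A, ‖SegE h - SegE g‖ ≤ γ * ‖SegE h - SegE g - T'‖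

/-- `CL(h̄)` is identifiable: every minimizer of `‖𝒜P(h) − 𝒜P(h̄)‖²` over
`∪_L Mod L` belongs to `CL(h̄)`. -/
def IdentifiableClass {K S m n : ℕ}
    (A : ETensor K S →ₗ[ℝ] EuclideanSpace ℝ (Fin m × Fin n))
    (Mod : ℕ → Set (Params K S)) (hbar : Params K S) : Prop :=
  ∀ L : ℕ, ∀ hstar ∈ Mod L,
    (∀ L' : ℕ, ∀ h ∈ Mod L',
      ‖A (SegE hstar) - A (SegE hbar)‖ ^ 2 ≤ ‖A (SegE h) - A (SegE hbar)‖ ^ 2) →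
    hstar ∈ CL hbar

lemma segre_eq_of_CL {K S : ℕ} {g hbar : Params K S} (hg : g ∈ CL hbar) :
    Segre g = Segre hbar := by
  obtain ⟨lam, hprod, hcomp⟩ := hg
  funext i
  simp only [Segre, hcomp, Pi.smul_apply, smul_eq_mul]
  rw [Finset.prod_mul_distrib, hprod, one_mul]

lemma CL_of_segre_eq {K S : ℕ} {hstar hbar : Params K S}
    (hbar_star : hbar ∈ hSstar K S) (heq : Segre hstar = Segre hbar) :
    hstar ∈ CL hbar := by
  have hj : ∀ k : Fin K, ∃ s, hbar k s ≠ 0 := by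
    intro k
    exact Function.ne_iff.mp (hbar_star k)
  choose j hj using hj
  set c : ℝ := ∏ k, hbar k (j k) with hc_def
  have hc : c ≠ 0 := Finset.prod_ne_zero_iff.mpr (fun k _ => hj k)
  have heqj : (∏ k, hstar k (j k)) = c := by
    have := congrFun heq j
    simpa [Segre] using this
  have hstarj : ∀ k : Fin K, hstar k (j k) ≠ 0 := by
    intro k
    have : (∏ k, hstar k (j k)) ≠ 0 := heqj ▸ hc
    exact fun h0 => this (Finset.prod_eq_zero (Finset.mem_univ k) h0)
  refine ⟨fun k => hstar k (j k) / hbar k (j k), ?_, ?_⟩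
  · rw [Finset.prod_div_distrib, heqj, ← hc_def, div_self hc]
  · intro k
    funext s
    -- use index i = Function.update j k s
    have hi := congrFun heq (Function.update j k s)
    have key : ∀ v : Params K S,
        Segre v (Function.update j k s)
          = v k s * ∏ k' ∈ Finset.univ.erase k, v k' (j k') := by
      intro v
      rw [Segre, ← Finset.mul_prod_erase Finset.univ _ (Finset.mem_univ k)]
      congr 1
      · rw [Function.update_self]
      · exact Finset.prod_congr rfl (fun k' hk' => by
          rw [Function.update_of_ne (Finset.mem_erase.mp hk').1])
    have keyj : ∀ v : Params K S,
        (∏ k', v k' (j k'))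
          = v k (j k) * ∏ k' ∈ Finset.univ.erase k, v k' (j k') :=
      fun v => (Finset.mul_prod_erase Finset.univ _ (Finset.mem_univ k)).symm
    rw [key, key] at hi
    set Ps := ∏ k' ∈ Finset.univ.erase k, hstar k' (j k') with hPs
    set Pb := ∏ k' ∈ Finset.univ.erase k, hbar k' (j k') with hPb
    have hPsj : hstar k (j k) * Ps = c := by rw [← heqj, keyj hstar]
    have hPbj : hbar k (j k) * Pb = c := by rw [hc_def, keyj hbar]
    have hPsne : Ps ≠ 0 := by
      intro h0; rw [h0, mul_zero] at hPsj; exact hc hPsj.symm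
    have hPbne : Pb ≠ 0 := by
      intro h0; rw [h0, mul_zero] at hPbj; exact hc hPbj.symm
    -- hi : hstar k s * Ps = hbar k s * Pb
    have : hstar k s = hbar k s * Pb / Ps := by
      field_simp
      linarith [hi]
    rw [this, Pi.smul_apply, smul_eq_mul]
    have hb := hj k
    have hcc : hbar k (j k) * Pb = hstar k (j k) * Ps := hPbj.trans hPsj.symm
    field_simp
    linear_combination hbar k s * hcc

lemma segE_eq_iff {K S : ℕ} {g h : Params K S} : SegE g = SegE h ↔ Segre g = Segre h := by
  constructor
  · intro he; exact (WithLp.equiv 2 _).symm.injective he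
  · intro he; unfold SegE; rw [he]

/-- necessary and sufficient conditions of identifiability. -/
theorem identifiability_characterization {K S m n : ℕ} (hK : 1 ≤ K) (hS : 2 ≤ S)
    (A : ETensor K S →ₗ[ℝ] EuclideanSpace ℝ (Fin m × Fin n))
    (Mod : ℕ → Set (Params K S))
    (hModNonempty : ∀ L, (Mod L).Nonempty)
    (hModStar : ∀ L, Mod L ⊆ hSstar K S) :
    -- (1) pointwise characterization
    (∀ Lbar : ℕ, ∀ hbar ∈ Mod Lbar,
      (IdentifiableClass A Mod hbar ↔
        ∀ L : ℕ, ∀ g ∈ Mod L, SegE g - SegE hbar ∈ LinearMap.ker A →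
          SegE g = SegE hbar)) ∧
    -- (2) global characterization
    ((∀ Lbar : ℕ, ∀ hbar ∈ Mod Lbar, IdentifiableClass A Mod hbar) ↔
      ∀ L L' : ℕ, ∀ h ∈ Mod L, ∀ g ∈ Mod L',
        SegE h - SegE g ∈ LinearMap.ker A → SegE h = SegE g) := by
  have key1 : ∀ Lbar : ℕ, ∀ hbar ∈ Mod Lbar,
      (IdentifiableClass A Mod hbar ↔
        ∀ L : ℕ, ∀ g ∈ Mod L, SegE g - SegE hbar ∈ LinearMap.ker A →
          SegE g = SegE hbar) := by
    intro Lbar hbar hbar_mem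
    constructor
    · intro hid L g hg hker
      have hzero : A (SegE g) - A (SegE hbar) = 0 := by
        have := LinearMap.mem_ker.mp hker
        rwa [map_sub] at this
      have hmin : ∀ L' : ℕ, ∀ h ∈ Mod L',
          ‖A (SegE g) - A (SegE hbar)‖ ^ 2 ≤ ‖A (SegE h) - A (SegE hbar)‖ ^ 2 := by
        intro L' h _
        rw [hzero, norm_zero]
        simpa using sq_nonneg ‖A (SegE h) - A (SegE hbar)‖
      have hCL := hid L g hg hmin
      exact segE_eq_iff.mpr (segre_eq_of_CL hCL)
    · intro hcond L hstar hstar_mem hmin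
      have h0 := hmin Lbar hbar hbar_mem
      rw [sub_self, norm_zero] at h0
      have hn : ‖A (SegE hstar) - A (SegE hbar)‖ = 0 := by
        have := sq_nonneg ‖A (SegE hstar) - A (SegE hbar)‖
        nlinarith [norm_nonneg (A (SegE hstar) - A (SegE hbar))]
      have hker : SegE hstar - SegE hbar ∈ LinearMap.ker A := by
        rw [LinearMap.mem_ker, map_sub]
        exact norm_eq_zero.mp hn
      have hseq := hcond L hstar hstar_mem hker
      exact CL_of_segre_eq (hModStar Lbar hbar_mem) (segE_eq_iff.mp hseq)
  refine ⟨key1, ?_⟩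
  constructor
  · intro hid L L' h hh g hg hker
    exact (key1 L' g hg).mp (hid L' g hg) L h hh hker
  · intro hglob Lbar hbar hbar_mem
    exact (key1 Lbar hbar hbar_mem).mpr
      (fun L g hg hker => hglob L Lbar g hg hbar hbar_mem hker)
end
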